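/- Let l ≥ 4 be an integer with l ≡ 4 (mod 6). Then the directed cycle of length l admits no homomorphism to any oriented graph on at most 3 vertices, but admits a homomorphism to the tournament T4 on vertex set {1,2,3,4} with arcs 1→2, 1→3, 2→3, 2→4, 3→4, 4→1. Consequently the oriented chromatic number of the directed cycle of length l is exactly 4. -/

import Mathlib

/-- An oriented graph: no loops, no pair of opposite arcs. -/
structure OrientedGraph (V : Type*) where
  arc : V → V → Prop
  irrefl : ∀ v, ¬ arc v v
  asymm : ∀ u v, arc u v → ¬ arc v u

/-- The underlying simple graph of an oriented graph. -/
def OrientedGraph.underlying {V : Type*} (G : OrientedGraph V) : SimpleGraph V where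
  Adj u v := G.arc u v ∨ G.arc v u
  symm := ⟨fun _ _ h => h.symm⟩
  loopless := ⟨fun v h => h.elim (G.irrefl v) (G.irrefl v)⟩

/-- Homomorphisms of oriented graphs. -/
def OrientedGraph.IsHom {V W : Type*} (G : OrientedGraph V) (H : OrientedGraph W)
    (φ : V → W) : Prop :=
  ∀ u v, G.arc u v → H.arc (φ u) (φ v)

/-- The tournament `T4` on vertex set `{1, 2, 3, 4}` (represented by `Fin 4`, with
vertex `k+1` represented by `k`) with arcs `1→2, 1→3, 2→3, 2→4, 3→4, 4→1`. -/
def T4 : OrientedGraph (Fin 4) where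
  arc a b := (a = 0 ∧ b = 1) ∨ (a = 0 ∧ b = 2) ∨ (a = 1 ∧ b = 2) ∨
    (a = 1 ∧ b = 3) ∨ (a = 2 ∧ b = 3) ∨ (a = 3 ∧ b = 0)
  irrefl := by decide
  asymm := by decide


/-- Auxiliary map for the homomorphism into `T4`. -/
def psiAux : ℕ → Fin 4
  | 0 => 0
  | 1 => 1
  | 2 => 2
  | 3 => 3
  | (n+4) => if n % 3 = 0 then 0 else if n % 3 = 1 then 1 else 3

/-- For `l ≥ 4` with `l ≡ 4 (mod 6)`, the directed cycle of length
`l` (a homomorphism from it being a map `φ` with an arc from `φ i` to `φ ((i+1) % l)`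
for all `i < l`) admits no homomorphism to any oriented graph on at most 3 vertices,
but admits a homomorphism to the tournament `T4`; hence its oriented chromatic number
is exactly 4. -/
theorem directed_cycle_oriented_chromatic_number_eq_four (l : ℕ) (hl : 4 ≤ l)
    (hmod : l % 6 = 4) :
    (∀ (W : Type) (_ : Fintype W), Fintype.card W ≤ 3 →
      ∀ H : OrientedGraph W, ¬ ∃ φ : ℕ → W, ∀ i < l, H.arc (φ i) (φ ((i + 1) % l))) ∧
    (∃ φ : ℕ → Fin 4, ∀ i < l, T4.arc (φ i) (φ ((i + 1) % l))) := by
  have hl3 : l % 3 = 1 := by omega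
  constructor
  · rintro W _ hcard H ⟨φ, hφ⟩
    classical
    have arc' : ∀ i, i + 1 < l → H.arc (φ i) (φ (i+1)) := by
      intro i h
      have := hφ i (by omega)
      rwa [Nat.mod_eq_of_lt h] at this
    have ne12 : ∀ i, i + 1 < l → φ i ≠ φ (i+1) := by
      intro i h he
      exact H.irrefl _ (he ▸ arc' i h)
    have ne13 : ∀ i, i + 2 < l → φ i ≠ φ (i+2) := by
      intro i h he
      have h1 : H.arc (φ i) (φ (i+1)) := arc' i (by omega)
      have h2 : H.arc (φ (i+1)) (φ (i+2)) := arc' (i+1) (by omega)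
      rw [← he] at h2
      exact H.asymm _ _ h1 h2
    have step : ∀ i, i + 3 < l → φ (i+3) = φ i := by
      intro i h
      by_contra hne
      have h4 : ({φ i, φ (i+1), φ (i+2), φ (i+3)} : Finset W).card = 4 := by
        rw [Finset.card_insert_of_notMem, Finset.card_insert_of_notMem,
          Finset.card_insert_of_notMem, Finset.card_singleton]
        · simp only [Finset.mem_singleton]
          exact ne12 (i+2) (by omega)
        · simp only [Finset.mem_insert, Finset.mem_singleton]
          push_neg
          exact ⟨ne12 (i+1) (by omega), ne13 (i+1) (by omega)⟩
        · simp only [Finset.mem_insert, Finset.mem_singleton]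
          push_neg
          exact ⟨ne12 i (by omega), ne13 i (by omega), hne ∘ Eq.symm⟩
      have hle : ({φ i, φ (i+1), φ (i+2), φ (i+3)} : Finset W).card ≤ Fintype.card W :=
        Finset.card_le_univ _ |>.trans (by simp [Finset.card_univ])
      omega
    have key : ∀ k, 3*k < l → φ (3*k) = φ 0 := by
      intro k
      induction k with
      | zero => simp
      | succ n ih =>
        intro h
        have h3 : 3*n + 3 < l := by omega
        have e : 3*(n+1) = 3*n + 3 := by ring
        rw [e, step _ h3]
        exact ih (by omega)
    have hlast : φ (l-1) = φ 0 := by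
      have e : l - 1 = 3 * ((l-1)/3) := by omega
      rw [e]
      exact key _ (by omega)
    have hfin := hφ (l-1) (by omega)
    have e : l - 1 + 1 = l := by omega
    rw [e, Nat.mod_self, hlast] at hfin
    exact H.irrefl _ hfin
  · refine ⟨psiAux, ?_⟩
    intro i hi
    match i, hi with
    | 0, _ =>
      have : (0 + 1) % l = 1 := Nat.mod_eq_of_lt (by omega)
      rw [this]; left; exact ⟨rfl, rfl⟩
    | 1, _ =>
      have : (1 + 1) % l = 2 := Nat.mod_eq_of_lt (by omega)
      rw [this]; right; right; left; exact ⟨rfl, rfl⟩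
    | 2, _ =>
      have : (2 + 1) % l = 3 := Nat.mod_eq_of_lt (by omega)
      rw [this]; right; right; right; right; left; exact ⟨rfl, rfl⟩
    | 3, _ =>
      have h30 : T4.arc (psiAux 3) (psiAux 0) := by simp [T4, psiAux]
      rcases eq_or_lt_of_le hl with h | h
      · have e : (3 + 1) % l = 0 := by rw [← h]
        rw [e]; exact h30
      · have : (3 + 1) % l = 4 := Nat.mod_eq_of_lt (by omega)
        rw [this]
        show T4.arc (psiAux 3) (psiAux 4)
        simp [T4, psiAux]
    | (n+4), hi =>
      rcases eq_or_lt_of_le (Nat.succ_le_of_lt hi) with h | h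
      · -- i = l - 1
        have e : (n + 4 + 1) % l = 0 := by
          have h' : n + 4 + 1 = l := h
          rw [h', Nat.mod_self]
        rw [e]
        have hn : n % 3 = 2 := by omega
        show T4.arc (if n % 3 = 0 then 0 else if n % 3 = 1 then 1 else 3) (psiAux 0)
        rw [hn]
        simp [T4, psiAux]
      · have e : (n + 4 + 1) % l = n + 5 := Nat.mod_eq_of_lt (by omega)
        rw [e]
        show T4.arc (if n % 3 = 0 then 0 else if n % 3 = 1 then 1 else 3)
          (if (n+1) % 3 = 0 then 0 else if (n+1) % 3 = 1 then 1 else 3)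
        have h3 : n % 3 = 0 ∨ n % 3 = 1 ∨ n % 3 = 2 := by omega
        rcases h3 with h3 | h3 | h3 <;>
          · have h4 : (n+1) % 3 = (n % 3 + 1) % 3 := by omega
            rw [h4, h3]
            simp [T4]
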